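/- Fix reals c > 0, d ≥ 0 and 0 < ρ < 1. For real n > e, define Ĥ(n) := log( c·(n/log n)^{−1/(d+2)} ) / log ρ, so that ρ^{Ĥ(n)} = c·(n/log n)^{−1/(d+2)}. Then, as n → ∞, the function g(n) := n·ρ^{Ĥ(n)} + (log n)·ρ^{−Ĥ(n)(1+d)} + Ĥ(n)·max{ ρ^{Ĥ(n)(1−d)}, Ĥ(n) } satisfies g(n) = O( n^{(d+1)/(d+2)} · (log n)^{1/(d+2)} ). -/

import Mathlib

set_option maxHeartbeats 1000000


open Real Filter Asymptotics

/-- asymptotic content of Corollary 1: with the depth limit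
`Ĥ(n) = log(c·(n/log n)^{−1/(d+2)}) / log ρ` (so that `ρ^{Ĥ(n)} = c(n/log n)^{−1/(d+2)}`),
the regret bound `n·ρ^Ĥ + (log n)·ρ^{−Ĥ(1+d)} + Ĥ·max{ρ^{Ĥ(1−d)}, Ĥ}` is
`O(n^{(d+1)/(d+2)}·(log n)^{1/(d+2)})` as `n → ∞`. -/
theorem corollary_regret_bigO
    (c d ρ : ℝ) (hc : 0 < c) (hd : 0 ≤ d) (hρ₀ : 0 < ρ) (hρ₁ : ρ < 1) :
    (fun n : ℝ =>
        let H : ℝ := Real.log (c * (n / Real.log n) ^ (-(1 / (d + 2)))) / Real.log ρ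
        n * ρ ^ H + Real.log n * ρ ^ (-(H * (1 + d))) + H * max (ρ ^ (H * (1 - d))) H)
      =O[atTop]
    (fun n : ℝ => n ^ ((d + 1) / (d + 2)) * Real.log n ^ (1 / (d + 2))) := by
  have hd2 : (0:ℝ) < d + 2 := by linarith
  have hlρ : Real.log ρ < 0 := Real.log_neg hρ₀ hρ₁
  set L : ℝ := -Real.log ρ with hLdef
  have hL : 0 < L := by simp [hLdef]; linarith
  set K : ℝ := 2 / L with hKdef
  have hK : 0 < K := by positivity
  -- eventually : log x ≤ x ^ (1/2)
  have evsq : ∀ᶠ x : ℝ in atTop, Real.log x ≤ x ^ ((1:ℝ)/2) := by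
    filter_upwards [(isLittleO_log_rpow_atTop (by norm_num : (0:ℝ) < 1/2)).def one_pos,
      eventually_ge_atTop (1:ℝ)] with x h hx1
    have : |Real.log x| ≤ |x ^ ((1:ℝ)/2)| := by simpa [Real.norm_eq_abs] using h
    calc Real.log x ≤ |Real.log x| := le_abs_self _
      _ ≤ |x ^ ((1:ℝ)/2)| := this
      _ = x ^ ((1:ℝ)/2) := abs_of_nonneg (Real.rpow_nonneg (by linarith) _)
  -- eventually : x ^ (1/2) ≤ x / log x
  have evhalf : ∀ᶠ x : ℝ in atTop, x ^ ((1:ℝ)/2) ≤ x / Real.log x := by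
    filter_upwards [evsq, Real.tendsto_log_atTop.eventually_ge_atTop 1,
      eventually_ge_atTop (1:ℝ)] with x hsq hlx hx1
    have hx0 : (0:ℝ) < x := by linarith
    have hs0 : (0:ℝ) < x ^ ((1:ℝ)/2) := Real.rpow_pos_of_pos hx0 _
    have hxx : x / x ^ ((1:ℝ)/2) = x ^ ((1:ℝ)/2) := by
      rw [eq_comm, eq_div_iff (ne_of_gt hs0), ← Real.rpow_add hx0]
      norm_num
    calc x ^ ((1:ℝ)/2) = x / x ^ ((1:ℝ)/2) := hxx.symm
      _ ≤ x / Real.log x := by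
          apply div_le_div_of_nonneg_left hx0.le (by linarith) hsq
  have hT : Tendsto (fun x : ℝ => x / Real.log x) atTop atTop :=
    tendsto_atTop_mono' _ evhalf (tendsto_rpow_atTop (by norm_num))
  -- eventual facts
  have ev3 : ∀ᶠ x : ℝ in atTop, K * c ^ ((1:ℝ) - d) ≤ (x / Real.log x) ^ (2 / (d + 2)) :=
    ((tendsto_rpow_atTop (by positivity : (0:ℝ) < 2 / (d+2))).comp hT).eventually_ge_atTop _
  have ev5 : ∀ᶠ x : ℝ in atTop, (d + 2) * |Real.log c| ≤ Real.log (x / Real.log x) :=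
    (Real.tendsto_log_atTop.comp hT).eventually_ge_atTop _
  have ev4 : ∀ᶠ x : ℝ in atTop,
      K ^ 2 * Real.log x ≤ (x / Real.log x) ^ ((d + 1) / (d + 2)) := by
    filter_upwards [evsq, evhalf,
      (isLittleO_log_rpow_atTop (by norm_num : (0:ℝ) < 1/4)).def
        (show (0:ℝ) < 1 / K ^ 2 by positivity),
      Real.tendsto_log_atTop.eventually_ge_atTop 1,
      eventually_ge_atTop (1:ℝ)] with x hsq hhalf h4 hlx hx1
    have hx0 : (0:ℝ) < x := by linarith
    have hlog4 : Real.log x ≤ (1 / K ^ 2) * x ^ ((1:ℝ)/4) := by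
      have := h4
      rw [Real.norm_eq_abs, Real.norm_eq_abs, abs_of_nonneg (by linarith : (0:ℝ) ≤ Real.log x),
        abs_of_nonneg (Real.rpow_nonneg hx0.le _)] at this
      exact this
    have h1 : K ^ 2 * Real.log x ≤ x ^ ((1:ℝ)/4) := by
      have h := mul_le_mul_of_nonneg_left hlog4 (by positivity : (0:ℝ) ≤ K ^ 2)
      calc K ^ 2 * Real.log x ≤ K ^ 2 * (1 / K ^ 2 * x ^ ((1:ℝ)/4)) := h
        _ = x ^ ((1:ℝ)/4) := by field_simp
    have ha : (1:ℝ)/4 ≤ (1/2) * ((d+1)/(d+2)) := by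
      rw [show (1/2:ℝ) * ((d+1)/(d+2)) = (1*(d+1))/(2*(d+2)) by
          rw [div_mul_div_comm],
        div_le_div_iff₀ (by norm_num) (by linarith)]
      linarith
    have h2 : x ^ ((1:ℝ)/4) ≤ x ^ ((1/2 : ℝ) * ((d+1)/(d+2))) :=
      Real.rpow_le_rpow_of_exponent_le hx1 ha
    have h3 : x ^ ((1/2 : ℝ) * ((d+1)/(d+2))) = (x ^ ((1:ℝ)/2)) ^ ((d+1)/(d+2)) :=
      Real.rpow_mul hx0.le _ _
    have h5 : (x ^ ((1:ℝ)/2)) ^ ((d+1)/(d+2)) ≤ (x / Real.log x) ^ ((d+1)/(d+2)) :=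
      Real.rpow_le_rpow (Real.rpow_nonneg hx0.le _) hhalf (by positivity)
    linarith [h2.trans_eq h3 |>.trans h5 |> h1.trans]
  rw [isBigO_iff]
  refine ⟨c + c ^ (-(1 + d)) + 1, ?_⟩
  filter_upwards [Real.tendsto_log_atTop.eventually_ge_atTop 1, eventually_ge_atTop (1:ℝ),
    hT.eventually_ge_atTop 1, ev3, ev4, ev5] with x hlx hx1 ht1 hE3 hE4 hE5
  have hx0 : (0:ℝ) < x := by linarith
  have hlx0 : (0:ℝ) < Real.log x := by linarith
  set t : ℝ := x / Real.log x with htdef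
  have ht0 : (0:ℝ) < t := by positivity
  have hlt0 : (0:ℝ) ≤ Real.log t := Real.log_nonneg ht1
  set X : ℝ := c * t ^ (-(1 / (d + 2))) with hXdef
  have hX : 0 < X := by positivity
  set H : ℝ := Real.log X / Real.log ρ with hHdef
  have hkey : H * Real.log ρ = Real.log X := div_mul_cancel₀ _ (ne_of_lt hlρ)
  have hpow : ∀ s : ℝ, ρ ^ (H * s) = X ^ s := by
    intro s
    rw [Real.rpow_def_of_pos hρ₀, Real.rpow_def_of_pos hX]
    congr 1
    rw [← hkey]; ring
  have hρH : ρ ^ H = X := by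
    have := hpow 1; simpa using this
  have hlogX : Real.log X = Real.log c - Real.log t / (d + 2) := by
    rw [hXdef, Real.log_mul (ne_of_gt hc) (ne_of_gt (Real.rpow_pos_of_pos ht0 _)),
      Real.log_rpow ht0]
    ring
  have hHval : H = (Real.log t / (d + 2) - Real.log c) / L := by
    rw [hHdef, hlogX, hLdef, div_neg, ← neg_div]
    ring_nf
  have habs0 : |Real.log c| ≤ Real.log t / (d + 2) := by
    rw [le_div_iff₀ hd2, mul_comm]; exact hE5
  have habs1 : Real.log c ≤ Real.log t / (d + 2) :=
    (le_abs_self _).trans habs0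
  have hH0 : 0 ≤ H := by
    rw [hHval]
    apply div_nonneg _ hL.le
    linarith
  have hltx : Real.log t ≤ Real.log x := by
    apply Real.log_le_log ht0
    rw [htdef, div_le_iff₀ hlx0]
    have := mul_le_mul_of_nonneg_left hlx hx0.le
    linarith
  have hHK : H ≤ K * Real.log x := by
    have h1 : Real.log t / (d + 2) ≤ Real.log t := by
      rw [div_le_iff₀ hd2]
      have := mul_le_mul_of_nonneg_left (show (1:ℝ) ≤ d + 2 by linarith) hlt0
      linarith
    have h2 : -Real.log c ≤ Real.log t / (d + 2) :=
      (neg_le_abs _).trans habs0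
    calc H = (Real.log t / (d + 2) - Real.log c) / L := hHval
      _ ≤ (2 * Real.log x) / L := by
          apply div_le_div_of_nonneg_right ?_ hL.le
          linarith
      _ = K * Real.log x := by rw [hKdef]; ring
  -- simplify the powers
  have hρ1d : ρ ^ (H * (1 - d)) = X ^ ((1:ℝ) - d) := hpow _
  have hρneg : ρ ^ (-(H * (1 + d))) = X ^ (-((1:ℝ) + d)) := by
    rw [show -(H * (1 + d)) = H * (-(1 + d)) by ring, hpow]
  -- value of the target
  set a : ℝ := (d + 1) / (d + 2) with hadef
  set G : ℝ := t ^ a * Real.log x with hGdef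
  have hG0 : 0 < G := by positivity
  have hgval : x ^ a * Real.log x ^ (1 / (d + 2)) = G := by
    have e1 : Real.log x ^ (1 / (d + 2)) = Real.log x ^ ((1:ℝ) - a) := by
      congr 1
      rw [hadef]
      field_simp
      norm_num
    have e2 : Real.log x ^ ((1:ℝ) - a) = Real.log x / Real.log x ^ a := by
      rw [Real.rpow_sub hlx0, Real.rpow_one]
    calc x ^ a * Real.log x ^ (1 / (d + 2))
        = x ^ a * (Real.log x / Real.log x ^ a) := by rw [e1, e2]
      _ = (x ^ a / Real.log x ^ a) * Real.log x := by ring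
      _ = (x / Real.log x) ^ a * Real.log x := by rw [Real.div_rpow hx0.le hlx0.le]
      _ = G := by rw [hGdef]
  have hxt : x = t * Real.log x := by
    rw [htdef, div_mul_cancel₀ _ (ne_of_gt hlx0)]
  -- term 1
  have hexp1 : (1:ℝ) + -(1/(d+2)) = a := by
    rw [hadef]
    field_simp
    ring
  have h1t : t * t ^ (-(1/(d+2))) = t ^ a := by
    nth_rewrite 1 [← Real.rpow_one t]
    rw [← Real.rpow_add ht0, hexp1]
  have hterm1 : x * X = c * G := by
    calc x * X = c * ((t * t ^ (-(1/(d+2)))) * Real.log x) := by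
          rw [hXdef]
          nth_rewrite 1 [hxt]
          ring
      _ = c * (t ^ a * Real.log x) := by rw [h1t]
      _ = c * G := by rw [hGdef]
  -- term 2
  have hXpow : ∀ s : ℝ, X ^ s = c ^ s * t ^ (-(1/(d+2)) * s) := by
    intro s
    rw [hXdef, Real.mul_rpow hc.le (Real.rpow_nonneg ht0.le _), ← Real.rpow_mul ht0.le]
  have hterm2 : Real.log x * X ^ (-((1:ℝ) + d)) = c ^ (-((1:ℝ)+d)) * G := by
    rw [hXpow, hGdef]
    rw [show -(1/(d+2)) * -((1:ℝ)+d) = a by rw [hadef]; field_simp; ring]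
    ring
  -- term 3
  have hX1d : X ^ ((1:ℝ) - d) = c ^ ((1:ℝ)-d) * t ^ ((d-1)/(d+2)) := by
    rw [hXpow]
    congr 2
    field_simp
    ring
  have hterm3a : H * X ^ ((1:ℝ) - d) ≤ G := by
    have h1 : H * X ^ ((1:ℝ)-d) ≤ K * Real.log x * X ^ ((1:ℝ)-d) :=
      mul_le_mul_of_nonneg_right hHK (Real.rpow_nonneg hX.le _)
    have h2 : K * Real.log x * X ^ ((1:ℝ)-d)
        = Real.log x * (K * c ^ ((1:ℝ)-d) * t ^ ((d-1)/(d+2))) := by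
      rw [hX1d]; ring
    have h3 : K * c ^ ((1:ℝ)-d) * t ^ ((d-1)/(d+2)) ≤ t ^ (2/(d+2)) * t ^ ((d-1)/(d+2)) :=
      mul_le_mul_of_nonneg_right hE3 (Real.rpow_nonneg ht0.le _)
    have h4 : t ^ (2/(d+2)) * t ^ ((d-1)/(d+2)) = t ^ a := by
      rw [← Real.rpow_add ht0, hadef]
      congr 1
      field_simp; ring
    rw [hGdef]
    calc H * X ^ ((1:ℝ)-d) ≤ Real.log x * (K * c ^ ((1:ℝ)-d) * t ^ ((d-1)/(d+2))) := by
          rw [← h2]; exact h1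
      _ ≤ Real.log x * (t ^ a) := by
          apply mul_le_mul_of_nonneg_left _ hlx0.le
          rw [← h4]; exact h3
      _ = t ^ a * Real.log x := by ring
  have hterm3b : H * H ≤ G := by
    have h1 : H * H ≤ (K * Real.log x) * (K * Real.log x) :=
      mul_le_mul hHK hHK hH0 (by positivity)
    have h2 : (K * Real.log x) * (K * Real.log x) = (K ^ 2 * Real.log x) * Real.log x := by
      ring
    rw [hGdef]
    calc H * H ≤ (K ^ 2 * Real.log x) * Real.log x := by rw [← h2]; exact h1
      _ ≤ t ^ a * Real.log x := mul_le_mul_of_nonneg_right hE4 hlx0.le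
  have hterm3 : H * max (X ^ ((1:ℝ) - d)) H ≤ G := by
    rw [mul_max_of_nonneg _ _ hH0]
    exact max_le hterm3a hterm3b
  -- assemble
  show ‖x * ρ ^ (Real.log (c * (x / Real.log x) ^ (-(1 / (d + 2)))) / Real.log ρ) +
      Real.log x * ρ ^ (-(Real.log (c * (x / Real.log x) ^ (-(1 / (d + 2)))) / Real.log ρ * (1 + d))) +
      Real.log (c * (x / Real.log x) ^ (-(1 / (d + 2)))) / Real.log ρ *
        max (ρ ^ (Real.log (c * (x / Real.log x) ^ (-(1 / (d + 2)))) / Real.log ρ * (1 - d)))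
          (Real.log (c * (x / Real.log x) ^ (-(1 / (d + 2)))) / Real.log ρ)‖
    ≤ (c + c ^ (-(1+d)) + 1) * ‖x ^ ((d+1)/(d+2)) * Real.log x ^ (1/(d+2))‖
  have hHeq : Real.log (c * (x / Real.log x) ^ (-(1 / (d + 2)))) / Real.log ρ = H := by
    rw [hHdef, hXdef, htdef]
  rw [hHeq, hρH, hρneg, hρ1d]
  have hnonneg2 : (0:ℝ) ≤ X ^ (-((1:ℝ)+d)) := Real.rpow_nonneg hX.le _
  have hlhs0 : 0 ≤ x * X + Real.log x * X ^ (-((1:ℝ)+d)) + H * max (X ^ ((1:ℝ)-d)) H := by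
    have : 0 ≤ H * max (X ^ ((1:ℝ)-d)) H :=
      mul_nonneg hH0 (le_max_of_le_left (Real.rpow_nonneg hX.le _))
    have t1 : 0 ≤ x * X := mul_nonneg hx0.le hX.le
    have t2 : 0 ≤ Real.log x * X ^ (-((1:ℝ)+d)) := mul_nonneg hlx0.le hnonneg2
    exact add_nonneg (add_nonneg t1 t2) this
  rw [Real.norm_of_nonneg hlhs0, Real.norm_of_nonneg (by positivity), ← hadef, hgval]
  have hcneg : c ^ (-((1:ℝ)+d)) = c ^ (-(1+d)) := by norm_num
  rw [hterm1, hterm2, hcneg]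
  exact (add_le_add (le_refl (c * G + c ^ (-(1+d)) * G)) hterm3).trans_eq (by ring)
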